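/- Let z ∈ (0,1] be such that the spectral radius of F(z) is strictly less than 1 (so I − F(z) is invertible and Σ_{k=0}^{∞} F(z)^k = (I − F(z))^{−1}). Then L̃ has finite entries, the series Σ_{x∈ℤ} z^{−x} ℙ(J_{τ^{x}}) L̃ converges entrywise, and Σ_{x∈ℤ} z^{−x} ℙ(J_{τ^{x}}) L̃ = (I − F(z))^{−1}. -/

import Mathlib

/- Framework: a discrete-time, discrete-space upward skip-free Markov additive chain (MAC)
on ℤ × {1,…,N}, with one-step transition matrices `A m` (for a level increment of `m`), is
encoded combinatorially: the law of the chain started at a state `s` is determined by the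
weights of its finite trajectories, so every probability/expectation appearing in the paper
can be written as a (countable) sum of trajectory weights. -/

attribute [local instance] Classical.propDecidable

noncomputable section

namespace MACPaper

/-- state space: level × phase -/
abbrev S (N : ℕ) := ℤ × Fin N

variable {N : ℕ}

/-- one-step transition weight -/
def step (A : ℤ → Matrix (Fin N) (Fin N) ℝ) (s t : S N) : ℝ :=
  A (t.1 - s.1) s.2 t.2

/-- probability weight of a finite trajectory, given by the list of successive states after `s` -/
def wt (A : ℤ → Matrix (Fin N) (Fin N) ℝ) : S N → List (S N) → ℝ
  | _, [] => 1
  | s, t :: r => step A s t * wt A t r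

/-- the trajectory (as a function of time) determined by start `s` and subsequent states `l` -/
def pos (s : S N) (l : List (S N)) : ℕ → S N
  | 0 => s
  | n + 1 => l.getD n s

/-- expectation of a path functional over trajectories of length `n` started at `s` -/
def expec (A : ℤ → Matrix (Fin N) (Fin N) ℝ) (s : S N) (n : ℕ)
    (f : (ℕ → S N) → ℝ) : ℝ :=
  ∑' l : { l : List (S N) // l.length = n }, f (pos s l.1) * wt A s l.1

/-- probability of an event depending on the trajectory up to time `n` -/
def prob (A : ℤ → Matrix (Fin N) (Fin N) ℝ) (s : S N) (n : ℕ)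
    (E : (ℕ → S N) → Prop) : ℝ :=
  expec A s n fun p => if E p then 1 else 0

/-- F(z) = Σ_{m=-1}^{∞} z^m A_{-m}   (entrywise) -/
def Fmat (A : ℤ → Matrix (Fin N) (Fin N) ℝ) (z : ℝ) : Matrix (Fin N) (Fin N) ℝ :=
  Matrix.of fun i j => ∑' m : ℤ, z ^ m * A (-m) i j

/-- P = Σ_m A_m  (entrywise) -/
def Pmat (A : ℤ → Matrix (Fin N) (Fin N) ℝ) : Matrix (Fin N) (Fin N) ℝ :=
  Matrix.of fun i j => ∑' m : ℤ, A m i j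

/-- `τ^{x} = n`: the chain first hits level `x` at time `n` -/
def hitsAt (x : ℤ) (n : ℕ) (p : ℕ → S N) : Prop :=
  (p n).1 = x ∧ ∀ k < n, (p k).1 ≠ x

/-- matrix 𝔼(v^{τ^{x}}; τ^{x} < ∞, J_{τ^{x}}), chain started at (0,·) -/
def hitMat (A : ℤ → Matrix (Fin N) (Fin N) ℝ) (v : ℝ) (x : ℤ) :
    Matrix (Fin N) (Fin N) ℝ :=
  Matrix.of fun i j =>
    ∑' n : ℕ, v ^ n * prob A ((0 : ℤ), i) n fun p => hitsAt x n p ∧ (p n).2 = j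

/-- v-discounted occupation mass matrix at level `x` (infinite horizon), chain started at (0,·) -/
def occMat (A : ℤ → Matrix (Fin N) (Fin N) ℝ) (v : ℝ) (x : ℤ) :
    Matrix (Fin N) (Fin N) ℝ :=
  Matrix.of fun i j =>
    ∑' k : ℕ, v ^ k * prob A ((0 : ℤ), i) k fun p => p k = (x, j)

/-- v-discounted occupation mass at level 0 up to the first hitting time of level `n` -/
def occUpToMat (A : ℤ → Matrix (Fin N) (Fin N) ℝ) (v : ℝ) (n : ℤ) :
    Matrix (Fin N) (Fin N) ℝ :=
  Matrix.of fun i j =>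
    ∑' k : ℕ, v ^ k * prob A ((0 : ℤ), i) k fun p =>
      p k = ((0 : ℤ), j) ∧ ∀ m < k, (p m).1 ≠ n

/-- the fundamental matrix G = ℙ(J_{τ^{1}}) -/
def Gmat (A : ℤ → Matrix (Fin N) (Fin N) ℝ) : Matrix (Fin N) (Fin N) ℝ :=
  hitMat A 1 1

/-- L̃ : occupation mass matrix at level 0, infinite horizon -/
def Ltilde (A : ℤ → Matrix (Fin N) (Fin N) ℝ) : Matrix (Fin N) (Fin N) ℝ :=
  occMat A 1 0

/-- the first scale matrix W(n) = (G^{-n} - ℙ(J_{τ^{-n}})) L̃ -/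
def Wmat (A : ℤ → Matrix (Fin N) (Fin N) ℝ) (n : ℕ) : Matrix (Fin N) (Fin N) ℝ :=
  ((Gmat A)⁻¹ ^ n - hitMat A 1 (-(n : ℤ))) * Ltilde A

/-- v-discounted first scale matrix W_v(n) = (G_v^{-n} - 𝔼(v^{τ^{-n}}; J_{τ^{-n}})) L̃_v -/
def WmatV (A : ℤ → Matrix (Fin N) (Fin N) ℝ) (v : ℝ) (n : ℕ) :
    Matrix (Fin N) (Fin N) ℝ :=
  ((hitMat A v 1)⁻¹ ^ n - hitMat A v (-(n : ℤ))) * occMat A v 0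

/-- the second scale matrix Z(z,n) = z^{-n}[I + Σ_{k=0}^{n} z^k W(k) (I - F(z))] -/
def Zmat (A : ℤ → Matrix (Fin N) (Fin N) ℝ) (z : ℝ) (n : ℕ) :
    Matrix (Fin N) (Fin N) ℝ :=
  z⁻¹ ^ n • (1 + (∑ k ∈ Finset.range (n + 1), z ^ k • Wmat A k) * (1 - Fmat A z))

/-- matrix 𝔼(v^{τ_a^+}; τ_a^+ < τ_{-b}^-, J_{τ_a^+}) (upward exit from the strip [-b,a]) -/
def upExitMat (A : ℤ → Matrix (Fin N) (Fin N) ℝ) (v : ℝ) (a b : ℤ) :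
    Matrix (Fin N) (Fin N) ℝ :=
  Matrix.of fun i j =>
    ∑' n : ℕ, v ^ n * prob A ((0 : ℤ), i) n fun p =>
      a ≤ (p n).1 ∧ (∀ k < n, -b < (p k).1 ∧ (p k).1 < a) ∧ (p n).2 = j

/-- matrix 𝔼(z^{-X_{τ_{-b}^-}}; τ_{-b}^- < τ_a^+, J_{τ_{-b}^-}) (downward exit from [-b,a]) -/
def downExitMat (A : ℤ → Matrix (Fin N) (Fin N) ℝ) (z : ℝ) (a b : ℤ) :
    Matrix (Fin N) (Fin N) ℝ :=
  Matrix.of fun i j =>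
    ∑' n : ℕ, expec A ((0 : ℤ), i) n fun p =>
      if (p n).1 ≤ -b ∧ (∀ k < n, -b < (p k).1 ∧ (p k).1 < a) ∧ (p n).2 = j
      then z ^ (-(p n).1) else 0

/-- matrix 𝔼(z^{-X_{τ_{-b}^-}}; τ_{-b}^- < ∞, J_{τ_{-b}^-}) (one-sided downward exit) -/
def oneDownMat (A : ℤ → Matrix (Fin N) (Fin N) ℝ) (z : ℝ) (b : ℤ) :
    Matrix (Fin N) (Fin N) ℝ :=
  Matrix.of fun i j =>
    ∑' n : ℕ, expec A ((0 : ℤ), i) n fun p =>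
      if (p n).1 ≤ -b ∧ (∀ k < n, -b < (p k).1) ∧ (p n).2 = j
      then z ^ (-(p n).1) else 0

/-- two-sided Skorokhod reflection of the level path `X` in [-d,0], started at `x`:
the regulated process H -/
def reflH (d : ℕ) (x : ℤ) (X : ℕ → ℤ) : ℕ → ℤ
  | 0 => x
  | n + 1 =>
      reflH d x X n + (X (n + 1) - X n)
        - max (reflH d x X n + (X (n + 1) - X n)) 0
        + max (-(d : ℤ) - (reflH d x X n + (X (n + 1) - X n))) 0

/-- upper regulator R^+ of the two-sided reflection in [-d,0] -/
def reflRp (d : ℕ) (x : ℤ) (X : ℕ → ℤ) : ℕ → ℤ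
  | 0 => 0
  | n + 1 => reflRp d x X n + max (reflH d x X n + (X (n + 1) - X n)) 0

/-- lower regulator R^- of the two-sided reflection in [-d,0] -/
def reflRm (d : ℕ) (x : ℤ) (X : ℕ → ℤ) : ℕ → ℤ
  | 0 => 0
  | n + 1 => reflRm d x X n + max (-(d : ℤ) - (reflH d x X n + (X (n + 1) - X n))) 0

/-- lower regulator of the one-sided reflection at -b : R^{-b}_n = -b - min(-b, min_{k≤n} X_k) -/
def lowReg (b : ℤ) (X : ℕ → ℤ) (n : ℕ) : ℤ :=
  -b - min (-b) ((Finset.range (n + 1)).inf' Finset.nonempty_range_add_one X)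

section AuxProof

open scoped ENNReal

/-! ### auxiliary ℝ≥0∞ framework -/

abbrev Ln (N n : ℕ) := { l : List (S N) // l.length = n }

def shiftPt (y : ℤ) (u : S N) : S N := (u.1 + y, u.2)

def estep (A : ℤ → Matrix (Fin N) (Fin N) ℝ) (s t : S N) : ℝ≥0∞ :=
  ENNReal.ofReal (step A s t)

def ewt (A : ℤ → Matrix (Fin N) (Fin N) ℝ) : S N → List (S N) → ℝ≥0∞
  | _, [] => 1
  | s, t :: r => estep A s t * ewt A t r

def eprob (A : ℤ → Matrix (Fin N) (Fin N) ℝ) (s : S N) (n : ℕ)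
    (Ev : (ℕ → S N) → Prop) : ℝ≥0∞ :=
  ∑' l : Ln N n, (if Ev (pos s l.1) then 1 else 0) * ewt A s l.1

variable {A : ℤ → Matrix (Fin N) (Fin N) ℝ}

lemma wt_nonneg (hA : ∀ m i j, 0 ≤ A m i j) (s : S N) (l : List (S N)) :
    0 ≤ wt A s l := by
  induction l generalizing s with
  | nil => exact zero_le_one
  | cons t r ih => exact mul_nonneg (hA _ _ _) (ih t)

lemma ewt_eq (hA : ∀ m i j, 0 ≤ A m i j) (s : S N) (l : List (S N)) :
    ewt A s l = ENNReal.ofReal (wt A s l) := by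
  induction l generalizing s with
  | nil => simp [ewt, wt]
  | cons t r ih =>
      rw [ewt, wt, ih t]
      exact (ENNReal.ofReal_mul (hA _ _ _)).symm

lemma ewt_ne_top (s : S N) (l : List (S N)) : ewt A s l ≠ ⊤ := by
  induction l generalizing s with
  | nil => exact ENNReal.one_ne_top
  | cons t r ih => exact ENNReal.mul_ne_top ENNReal.ofReal_ne_top (ih t)

instance : Unique (Ln N 0) where
  default := ⟨[], rfl⟩
  uniq := fun l => Subtype.ext (List.length_eq_zero_iff.mp l.2)

def econs (n : ℕ) : S N × Ln N n ≃ Ln N (n + 1) where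
  toFun p := ⟨p.1 :: p.2.1, by simp [p.2.2]⟩
  invFun l := (l.1.head (List.ne_nil_of_length_pos (by rw [l.2]; omega)),
    ⟨l.1.tail, by simp [List.length_tail, l.2]⟩)
  left_inv p := by rcases p with ⟨t, ⟨r, hr⟩⟩; rfl
  right_inv l := by
    rcases l with ⟨l, hl⟩
    cases l with
    | nil => simp at hl
    | cons a r => rfl

lemma pos_cons_le {t : S N} {r : List (S N)} {s : S N} {n : ℕ} (h : n ≤ r.length) :
    pos s (t :: r) (n + 1) = pos t r n := by
  cases n with
  | zero => rfl
  | succ m =>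
      have hm : m < r.length := h
      show (t :: r).getD (m + 1) s = r.getD m t
      rw [List.getD_eq_getElem _ _ (by simpa using Nat.succ_lt_succ hm),
        List.getD_eq_getElem _ _ hm]
      rfl

lemma pos_map_shift (y : ℤ) (s : S N) (l : List (S N)) (n : ℕ) :
    pos (shiftPt y s) (l.map (shiftPt y)) n = shiftPt y (pos s l n) := by
  cases n with
  | zero => rfl
  | succ m =>
      show (l.map (shiftPt y)).getD m (shiftPt y s) = shiftPt y (l.getD m s)
      exact List.getD_map _ _ _

lemma ewt_shift (y : ℤ) (s : S N) (l : List (S N)) :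
    ewt A (shiftPt y s) (l.map (shiftPt y)) = ewt A s l := by
  induction l generalizing s with
  | nil => rfl
  | cons t r ih =>
      show estep A _ _ * _ = _
      rw [ih t]
      congr 1
      unfold estep step shiftPt
      simp

def endSt (s : S N) (l : List (S N)) : S N := pos s l l.length

lemma endSt_cons (s t : S N) (r : List (S N)) : endSt s (t :: r) = endSt t r := by
  unfold endSt
  exact pos_cons_le le_rfl

lemma ewt_append (s : S N) (l₁ l₂ : List (S N)) :
    ewt A s (l₁ ++ l₂) = ewt A s l₁ * ewt A (endSt s l₁) l₂ := by
  induction l₁ generalizing s with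
  | nil => simp [ewt, endSt, pos]
  | cons t r ih =>
      show estep A s t * ewt A t (r ++ l₂) = estep A s t * ewt A t r * _
      rw [ih t, endSt_cons, mul_assoc]

lemma pos_append_left {s : S N} {l₁ l₂ : List (S N)} {n : ℕ} (h : n ≤ l₁.length) :
    pos s (l₁ ++ l₂) n = pos s l₁ n := by
  cases n with
  | zero => rfl
  | succ m =>
      show (l₁ ++ l₂).getD m s = l₁.getD m s
      exact List.getD_append _ _ _ _ (by omega)

lemma pos_append_right {s : S N} {l₁ l₂ : List (S N)} {m : ℕ} (h : m ≤ l₂.length) :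
    pos s (l₁ ++ l₂) (l₁.length + m) = pos (endSt s l₁) l₂ m := by
  cases m with
  | zero => exact pos_append_left le_rfl
  | succ m =>
      have h1 : l₁.length + m < (l₁ ++ l₂).length := by
        simp only [List.length_append]; omega
      have h2 : m < l₂.length := by omega
      show (l₁ ++ l₂).getD (l₁.length + m) s = l₂.getD m (endSt s l₁)
      rw [List.getD_eq_getElem _ _ h1, List.getD_eq_getElem _ _ h2]
      rw [List.getElem_append_right (Nat.le_add_right _ _)]
      congr 1
      omega

lemma pos_take {s : S N} {l : List (S N)} {n t : ℕ} (hn : t ≤ n) :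
    pos s (l.take n) t = pos s l t := by
  cases t with
  | zero => rfl
  | succ m =>
      show (l.take n).getD m s = l.getD m s
      by_cases hm : m < l.length
      · have hm2 : m < (l.take n).length := by
          simp [List.length_take]; omega
        rw [List.getD_eq_getElem _ _ hm2, List.getD_eq_getElem _ _ hm]
        exact List.getElem_take ..
      · rw [List.getD_eq_default _ _ (by simp [List.length_take]; omega),
          List.getD_eq_default _ _ (by omega)]

lemma tsum_estep (y : ℤ) (i : Fin N) (g : ℤ → Fin N → ℝ≥0∞) :
    ∑' t : S N, estep A (y, i) t * g (t.1 - y) t.2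
      = ∑' q : ℤ × Fin N, ENNReal.ofReal (A q.1 i q.2) * g q.1 q.2 := by
  have := Equiv.tsum_eq (Equiv.prodCongr (Equiv.addRight y) (Equiv.refl (Fin N)))
    (fun t : S N => estep A (y, i) t * g (t.1 - y) t.2)
  rw [← this]
  refine tsum_congr fun q => ?_
  simp only [Equiv.prodCongr_apply, Equiv.coe_addRight, Equiv.refl_apply, Prod.map]
  unfold estep step
  norm_num

lemma estep_tsum_le (hA : ∀ m i j, 0 ≤ A m i j)
    (hsum : ∀ i, Summable fun q : ℤ × Fin N => A q.1 i q.2)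
    (hsub : ∀ i, ∑' q : ℤ × Fin N, A q.1 i q.2 ≤ 1) (s : S N) :
    ∑' t : S N, estep A s t ≤ 1 := by
  obtain ⟨y, i⟩ := s
  have h1 : ∑' t : S N, estep A (y, i) t
      = ∑' q : ℤ × Fin N, ENNReal.ofReal (A q.1 i q.2) := by
    have := tsum_estep (A := A) y i (fun _ _ => 1)
    simpa using this
  rw [h1, ← ENNReal.ofReal_tsum_of_nonneg (fun q => hA _ _ _) (hsum i)]
  exact ENNReal.ofReal_le_one.mpr (hsub i)

lemma ewt_tsum_le (hA : ∀ m i j, 0 ≤ A m i j)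
    (hsum : ∀ i, Summable fun q : ℤ × Fin N => A q.1 i q.2)
    (hsub : ∀ i, ∑' q : ℤ × Fin N, A q.1 i q.2 ≤ 1) :
    ∀ (n : ℕ) (s : S N), ∑' l : Ln N n, ewt A s l.1 ≤ 1 := by
  intro n
  induction n with
  | zero =>
      intro s
      rw [tsum_eq_single (default : Ln N 0) (fun l hl => absurd (Unique.uniq _ l) hl)]
      exact le_rfl
  | succ n ih =>
      intro s
      rw [← Equiv.tsum_eq (econs n) (fun l : Ln N (n+1) => ewt A s l.1), ENNReal.tsum_prod']
      have h1 : ∀ t : S N, ∑' r : Ln N n, ewt A s ((econs n (t, r)).1)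
          = estep A s t * ∑' r : Ln N n, ewt A t r.1 := by
        intro t
        rw [← ENNReal.tsum_mul_left]
        rfl
      calc ∑' (t : S N) (r : Ln N n), ewt A s ((econs n (t, r)).1)
          = ∑' t : S N, estep A s t * ∑' r : Ln N n, ewt A t r.1 := tsum_congr h1
        _ ≤ ∑' t : S N, estep A s t * 1 :=
            ENNReal.tsum_le_tsum fun t => mul_le_mul_right (ih t) _
        _ ≤ 1 := by
            simpa using estep_tsum_le hA hsum hsub s

lemma eprob_le_one (hA : ∀ m i j, 0 ≤ A m i j)
    (hsum : ∀ i, Summable fun q : ℤ × Fin N => A q.1 i q.2)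
    (hsub : ∀ i, ∑' q : ℤ × Fin N, A q.1 i q.2 ≤ 1) (s : S N) (n : ℕ)
    (Ev : (ℕ → S N) → Prop) : eprob A s n Ev ≤ 1 := by
  refine le_trans (ENNReal.tsum_le_tsum fun l => ?_) (ewt_tsum_le hA hsum hsub n s)
  split_ifs <;> simp

lemma eprob_ne_top (hA : ∀ m i j, 0 ≤ A m i j)
    (hsum : ∀ i, Summable fun q : ℤ × Fin N => A q.1 i q.2)
    (hsub : ∀ i, ∑' q : ℤ × Fin N, A q.1 i q.2 ≤ 1) (s : S N) (n : ℕ)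
    (Ev : (ℕ → S N) → Prop) : eprob A s n Ev ≠ ⊤ :=
  ((eprob_le_one hA hsum hsub s n Ev).trans_lt ENNReal.one_lt_top).ne

lemma prob_eq_toReal (hA : ∀ m i j, 0 ≤ A m i j) (s : S N) (n : ℕ)
    (Ev : (ℕ → S N) → Prop) : prob A s n Ev = (eprob A s n Ev).toReal := by
  unfold prob expec eprob
  rw [ENNReal.tsum_toReal_eq (fun l => ENNReal.mul_ne_top
    (by split_ifs <;> simp) (ewt_ne_top _ _))]
  refine tsum_congr fun l => ?_
  rw [ENNReal.toReal_mul, ewt_eq hA, ENNReal.toReal_ofReal (wt_nonneg hA _ _)]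
  by_cases hEv : Ev (pos s l.1) <;> simp [hEv]

lemma eprob_congr {s : S N} {n : ℕ} {Ev Ev' : (ℕ → S N) → Prop}
    (h : ∀ p, Ev p ↔ Ev' p) : eprob A s n Ev = eprob A s n Ev' :=
  tsum_congr fun l => by rw [if_congr (h _) rfl rfl]

def eshift (y : ℤ) (n : ℕ) : Ln N n ≃ Ln N n where
  toFun l := ⟨l.1.map (shiftPt y), by simp [l.2]⟩
  invFun l := ⟨l.1.map (shiftPt (-y)), by simp [l.2]⟩
  left_inv l := Subtype.ext (by
    simp only [List.map_map]
    have : shiftPt (N := N) (-y) ∘ shiftPt y = id := by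
      funext u; simp [shiftPt]
    simp [this])
  right_inv l := Subtype.ext (by
    simp only [List.map_map]
    have : shiftPt (N := N) y ∘ shiftPt (-y) = id := by
      funext u; simp [shiftPt]
    simp [this])

lemma eprob_shift (y : ℤ) (s : S N) (n : ℕ) (Ev : (ℕ → S N) → Prop) :
    eprob A (shiftPt y s) n Ev
      = eprob A s n (fun p => Ev (fun t => shiftPt y (p t))) := by
  unfold eprob
  rw [← Equiv.tsum_eq (eshift y n) (fun l : Ln N n =>
    (if Ev (pos (shiftPt y s) l.1) then 1 else 0) * ewt A (shiftPt y s) l.1)]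
  refine tsum_congr fun l => ?_
  have h1 : pos (shiftPt y s) ((eshift y n l).1) = fun t => shiftPt y (pos s l.1 t) := by
    funext t
    exact pos_map_shift y s l.1 t
  show (if Ev (pos (shiftPt y s) (l.1.map (shiftPt y))) then 1 else 0)
      * ewt A (shiftPt y s) (l.1.map (shiftPt y)) = _
  rw [ewt_shift]
  congr 1
  rw [if_congr (iff_of_eq (congrArg Ev (funext fun t => pos_map_shift y s l.1 t))) rfl rfl]

lemma eprob_succ (s : S N) (n : ℕ) (Ev : (ℕ → S N) → Prop)
    (Ev' : S N → (ℕ → S N) → Prop)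
    (h : ∀ (t : S N) (r : Ln N n), Ev (pos s (t :: r.1)) ↔ Ev' t (pos t r.1)) :
    eprob A s (n + 1) Ev = ∑' t : S N, estep A s t * eprob A t n (Ev' t) := by
  unfold eprob
  rw [← Equiv.tsum_eq (econs n), ENNReal.tsum_prod']
  refine tsum_congr fun t => ?_
  rw [← ENNReal.tsum_mul_left]
  refine tsum_congr fun r => ?_
  show (if Ev (pos s (t :: r.1)) then 1 else 0) * ewt A s (t :: r.1) = _
  rw [if_congr (h t r) rfl rfl]
  show _ * (estep A s t * ewt A t r.1) = _
  ring

/-! ### the twisted kernel -/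

def w (z : ℝ) (x : ℤ) : ℝ≥0∞ := ENNReal.ofReal (z ^ (-x))

def eqk (A : ℤ → Matrix (Fin N) (Fin N) ℝ) (k : ℕ) (x : ℤ) (i j : Fin N) : ℝ≥0∞ :=
  eprob A ((0 : ℤ), i) k (fun p => p k = (x, j))

def eFm (A : ℤ → Matrix (Fin N) (Fin N) ℝ) (z : ℝ) : Matrix (Fin N) (Fin N) ℝ≥0∞ :=
  Matrix.of fun i j => ∑' m : ℤ, w z m * ENNReal.ofReal (A m i j)

lemma hw_add {z : ℝ} (hz0 : 0 < z) (x y : ℤ) : w z (x + y) = w z x * w z y := by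
  unfold w
  rw [neg_add, zpow_add₀ hz0.ne', ENNReal.ofReal_mul (le_of_lt (zpow_pos hz0 _))]

lemma hw_zero (z : ℝ) : w z 0 = 1 := by simp [w]

lemma eqk_shift (k : ℕ) (x : ℤ) (s : S N) (j : Fin N) :
    eprob A s k (fun p => p k = (x, j)) = eqk A k (x - s.1) s.2 j := by
  obtain ⟨y, c⟩ := s
  show eprob A (y, c) k (fun p => p k = (x, j)) = eqk A k (x - y) c j
  have h0 : ((y, c) : S N) = shiftPt y ((0 : ℤ), c) := by simp [shiftPt]
  rw [h0, eprob_shift]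
  unfold eqk
  refine eprob_congr fun p => ?_
  show shiftPt y (p k) = (x, j) ↔ p k = (x - y, j)
  constructor
  · intro h
    have h1 : (shiftPt y (p k)).1 = x := by rw [h]
    have h2 : (shiftPt y (p k)).2 = j := by rw [h]
    unfold shiftPt at h1 h2
    have : (p k).1 = x - y := by omega
    exact Prod.ext this h2
  · intro h
    rw [h]
    unfold shiftPt
    exact Prod.ext (by omega) rfl

lemma eqk_zero (x : ℤ) (i j : Fin N) :
    eqk A 0 x i j = if x = 0 ∧ i = j then 1 else 0 := by
  unfold eqk eprob
  rw [tsum_eq_single (default : Ln N 0) (fun l hl => absurd (Unique.uniq _ l) hl)]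
  rw [show ewt A ((0:ℤ), i) (default : Ln N 0).1 = 1 from rfl, mul_one]
  have hiff : ((fun p => p 0 = (x, j)) (pos ((0:ℤ), i) (default : Ln N 0).1))
      = (x = 0 ∧ i = j) := by
    refine propext ⟨fun h => ?_, fun h => ?_⟩
    · have h' : ((0 : ℤ), i) = (x, j) := h
      rw [Prod.mk.injEq] at h'
      exact ⟨h'.1.symm, h'.2⟩
    · obtain ⟨rfl, rfl⟩ := h
      rfl
  rw [hiff]
  congr

lemma EI {z : ℝ} (hz0 : 0 < z) (k : ℕ) (i j : Fin N) :
    ∑' x : ℤ, w z x * eqk A k x i j = (eFm A z ^ k) i j := by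
  induction k generalizing i j with
  | zero =>
      rw [tsum_eq_single 0 ?h0]
      · rw [eqk_zero, hw_zero, one_mul, pow_zero]
        simp [Matrix.one_apply, eq_comm]
      · intro x hx
        rw [eqk_zero]
        simp [hx]
  | succ k ih =>
      have hstep : ∀ x : ℤ, eqk A (k+1) x i j
          = ∑' t : S N, estep A ((0:ℤ), i) t * eqk A k (x - t.1) t.2 j := by
        intro x
        unfold eqk
        rw [eprob_succ ((0:ℤ), i) k _ (fun t p => p k = (x, j)) ?_]
        · exact tsum_congr fun t => by rw [eqk_shift k x t j]; rfl
        · intro t r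
          rw [pos_cons_le (le_of_eq r.2.symm)]
      calc ∑' x : ℤ, w z x * eqk A (k+1) x i j
          = ∑' (x : ℤ) (t : S N), w z x * (estep A ((0:ℤ), i) t * eqk A k (x - t.1) t.2 j) := by
            refine tsum_congr fun x => ?_
            rw [hstep x, ENNReal.tsum_mul_left]
        _ = ∑' (t : S N) (x : ℤ), w z x * (estep A ((0:ℤ), i) t * eqk A k (x - t.1) t.2 j) :=
            ENNReal.tsum_comm
        _ = ∑' t : S N, estep A ((0:ℤ), i) t * (w z t.1 * (eFm A z ^ k) t.2 j) := by
            refine tsum_congr fun t => ?_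
            have h1 : ∀ x : ℤ, w z x * (estep A ((0:ℤ), i) t * eqk A k (x - t.1) t.2 j)
                = estep A ((0:ℤ), i) t * (w z x * eqk A k (x - t.1) t.2 j) := fun x => by ring
            rw [tsum_congr h1, ENNReal.tsum_mul_left]
            congr 1
            have he := Equiv.tsum_eq (Equiv.addRight t.1)
              (fun x : ℤ => w z x * eqk A k (x - t.1) t.2 j)
            rw [← he]
            have h2 : ∀ x : ℤ, w z (x + t.1) * eqk A k (x + t.1 - t.1) t.2 j
                = w z t.1 * (w z x * eqk A k x t.2 j) := by
              intro x
              rw [add_sub_cancel_right, hw_add hz0]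
              ring
            calc ∑' x : ℤ, w z ((Equiv.addRight t.1) x) * eqk A k ((Equiv.addRight t.1) x - t.1) t.2 j
                = ∑' x : ℤ, w z t.1 * (w z x * eqk A k x t.2 j) := tsum_congr fun x => h2 x
              _ = w z t.1 * ∑' x : ℤ, w z x * eqk A k x t.2 j := ENNReal.tsum_mul_left
              _ = w z t.1 * (eFm A z ^ k) t.2 j := by rw [ih]
        _ = ∑' q : ℤ × Fin N, ENNReal.ofReal (A q.1 i q.2) * (w z q.1 * (eFm A z ^ k) q.2 j) := by
            rw [← tsum_estep 0 i (fun m c => w z m * (eFm A z ^ k) c j)]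
            exact tsum_congr fun t => by rw [sub_zero]
        _ = ∑' (m : ℤ) (c : Fin N), ENNReal.ofReal (A m i c) * (w z m * (eFm A z ^ k) c j) :=
            ENNReal.tsum_prod'
        _ = ∑' (c : Fin N) (m : ℤ), ENNReal.ofReal (A m i c) * (w z m * (eFm A z ^ k) c j) :=
            ENNReal.tsum_comm
        _ = ∑ c : Fin N, eFm A z i c * (eFm A z ^ k) c j := by
            rw [tsum_fintype]
            refine Finset.sum_congr rfl fun c _ => ?_
            have h3 : ∀ m : ℤ, ENNReal.ofReal (A m i c) * (w z m * (eFm A z ^ k) c j)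
                = w z m * ENNReal.ofReal (A m i c) * (eFm A z ^ k) c j := fun m => by ring
            rw [tsum_congr h3, ENNReal.tsum_mul_right]
            rfl
        _ = (eFm A z ^ (k+1)) i j := by
            rw [pow_succ', Matrix.mul_apply]


/-! ### first passage decomposition -/

abbrev Path (N : ℕ) := Σ k : ℕ, Ln N k

def ehit (A : ℤ → Matrix (Fin N) (Fin N) ℝ) (x : ℤ) (i c : Fin N) : ℝ≥0∞ :=
  ∑' n : ℕ, eprob A ((0 : ℤ), i) n (fun p => hitsAt x n p ∧ (p n).2 = c)

def eL (A : ℤ → Matrix (Fin N) (Fin N) ℝ) (c j : Fin N) : ℝ≥0∞ :=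
  ∑' k : ℕ, eqk A k 0 c j

def eocc (A : ℤ → Matrix (Fin N) (Fin N) ℝ) (x : ℤ) (i j : Fin N) : ℝ≥0∞ :=
  ∑' k : ℕ, eqk A k x i j

lemma path_ext {p q : Path N} (h : p.2.1 = q.2.1) : p = q := by
  rcases p with ⟨k, l, hl⟩
  rcases q with ⟨k', l', hl'⟩
  simp only at h
  subst h
  have hk : k = k' := hl.symm.trans hl'
  subst hk
  rfl

lemma shiftPt_injective (y : ℤ) : Function.Injective (shiftPt (N := N) y) := by
  intro u v h
  unfold shiftPt at h
  rw [Prod.mk.injEq] at h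
  exact Prod.ext (by omega) h.2

lemma shift_shift_cancel (y : ℤ) (l : List (S N)) :
    (l.map (shiftPt (-y))).map (shiftPt y) = l := by
  rw [List.map_map]
  have h : shiftPt (N := N) y ∘ shiftPt (-y) = id := by
    funext u
    unfold shiftPt
    simp
  rw [h, List.map_id]

lemma EII (x : ℤ) (i j : Fin N) :
    eocc A x i j = ∑ c : Fin N, ehit A x i c * eL A c j := by
  classical
  set s₀ : S N := ((0 : ℤ), i) with hs₀
  set f : Path N → ℝ≥0∞ := fun q =>
    (@ite ℝ≥0∞ (pos s₀ q.2.1 q.1 = (x, j)) (Classical.propDecidable _) 1 0)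
      * ewt A s₀ q.2.1 with hfdef
  set g : Fin N × Path N × Path N → ℝ≥0∞ := fun u =>
    ((@ite ℝ≥0∞ (hitsAt x u.2.1.1 (pos s₀ u.2.1.2.1) ∧ (pos s₀ u.2.1.2.1 u.2.1.1).2 = u.1)
        (Classical.propDecidable _) 1 0) * ewt A s₀ u.2.1.2.1) *
    ((@ite ℝ≥0∞ (pos ((0 : ℤ), u.1) u.2.2.2.1 u.2.2.1 = ((0 : ℤ), j))
        (Classical.propDecidable _) 1 0)
        * ewt A ((0 : ℤ), u.1) u.2.2.2.1) with hgdef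
  have hf : eocc A x i j = ∑' q : Path N, f q := by
    rw [hfdef, ENNReal.tsum_sigma']
    rfl
  have heL : ∀ c : Fin N, eL A c j = ∑' p₂ : Path N,
      (@ite ℝ≥0∞ (pos ((0 : ℤ), c) p₂.2.1 p₂.1 = ((0 : ℤ), j)) (Classical.propDecidable _) 1 0)
        * ewt A ((0 : ℤ), c) p₂.2.1 := by
    intro c
    rw [ENNReal.tsum_sigma']
    rfl
  have hehit : ∀ c : Fin N, ehit A x i c = ∑' p₁ : Path N,
      (@ite ℝ≥0∞ (hitsAt x p₁.1 (pos s₀ p₁.2.1) ∧ (pos s₀ p₁.2.1 p₁.1).2 = c)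
        (Classical.propDecidable _) 1 0)
        * ewt A s₀ p₁.2.1 := by
    intro c
    rw [ENNReal.tsum_sigma']
    rfl
  have hg : ∑' u : Fin N × Path N × Path N, g u = ∑ c : Fin N, ehit A x i c * eL A c j := by
    rw [hgdef, ENNReal.tsum_prod', tsum_fintype]
    refine Finset.sum_congr rfl fun c _ => ?_
    rw [ENNReal.tsum_prod']
    have h1 : ∀ p₁ : Path N,
        (∑' p₂ : Path N,
          ((@ite ℝ≥0∞ (hitsAt x p₁.1 (pos s₀ p₁.2.1) ∧ (pos s₀ p₁.2.1 p₁.1).2 = c)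
            (Classical.propDecidable _) 1 0)
            * ewt A s₀ p₁.2.1) *
          ((@ite ℝ≥0∞ (pos ((0 : ℤ), c) p₂.2.1 p₂.1 = ((0 : ℤ), j))
            (Classical.propDecidable _) 1 0)
            * ewt A ((0 : ℤ), c) p₂.2.1))
        = ((@ite ℝ≥0∞ (hitsAt x p₁.1 (pos s₀ p₁.2.1) ∧ (pos s₀ p₁.2.1 p₁.1).2 = c)
            (Classical.propDecidable _) 1 0)
            * ewt A s₀ p₁.2.1) * eL A c j := by
      intro p₁
      rw [ENNReal.tsum_mul_left, heL c]
    rw [tsum_congr h1, ENNReal.tsum_mul_right, hehit c]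
  rw [hf, ← hg]
  have hθlen : ∀ u : Fin N × Path N × Path N,
      (u.2.1.2.1 ++ (u.2.2.2.1.map (shiftPt x))).length = u.2.1.1 + u.2.2.1 := by
    intro u
    simp [u.2.1.2.2, u.2.2.2.2]
  refine tsum_eq_tsum_of_ne_zero_bij
    (fun u => ⟨u.1.2.1.1 + u.1.2.2.1, ⟨u.1.2.1.2.1 ++ (u.1.2.2.2.1.map (shiftPt x)),
      hθlen u.1⟩⟩) ?_ ?_ ?_
  · -- injectivity
    rintro ⟨⟨c, ⟨n, l₁, h₁⟩, ⟨m, l₂, h₂⟩⟩, hu⟩ ⟨⟨c', ⟨n', l₁', h₁'⟩, ⟨m', l₂', h₂'⟩⟩, hu'⟩ heq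
    rw [Function.mem_support, hgdef] at hu hu'
    simp only at hu hu'
    have cond1 : hitsAt x n (pos s₀ l₁) ∧ (pos s₀ l₁ n).2 = c := by
      by_contra hcon
      rw [if_neg hcon, zero_mul, zero_mul] at hu
      exact hu rfl
    have cond1' : hitsAt x n' (pos s₀ l₁') ∧ (pos s₀ l₁' n').2 = c' := by
      by_contra hcon
      rw [if_neg hcon, zero_mul, zero_mul] at hu'
      exact hu' rfl
    have hlist : l₁ ++ l₂.map (shiftPt x) = l₁' ++ l₂'.map (shiftPt x) :=
      congrArg (fun q : Path N => q.2.1) heq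
    have hh1 : hitsAt x l₁.length (pos s₀ l₁) := h₁.symm ▸ cond1.1
    have hh1' : hitsAt x l₁'.length (pos s₀ l₁') := h₁'.symm ▸ cond1'.1
    have haux : ∀ (a₁ a₂ b₁ b₂ : List (S N)), a₁ ++ a₂ = b₁ ++ b₂ →
        hitsAt x a₁.length (pos s₀ a₁) → hitsAt x b₁.length (pos s₀ b₁) →
        b₁.length ≤ a₁.length := by
      intro a₁ a₂ b₁ b₂ hab ha hb
      by_contra hcon
      push_neg at hcon
      have e1 : pos s₀ (a₁ ++ a₂) a₁.length = pos s₀ a₁ a₁.length := pos_append_left le_rfl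
      have e2 : pos s₀ (b₁ ++ b₂) a₁.length = pos s₀ b₁ a₁.length :=
        pos_append_left hcon.le
      have := hb.2 a₁.length hcon
      rw [← e2, ← hab, e1] at this
      exact this ha.1
    have hlen : l₁.length = l₁'.length :=
      le_antisymm (haux _ _ _ _ hlist.symm hh1' hh1) (haux _ _ _ _ hlist hh1 hh1')
    obtain ⟨hl1, hl2⟩ := List.append_inj hlist hlen
    have hl2' : l₂ = l₂' := List.map_injective_iff.mpr (shiftPt_injective x) hl2
    have hn : n = n' := by rw [← h₁, ← h₁', hl1]
    have hm : m = m' := by rw [← h₂, ← h₂', hl2']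
    have hc : c = c' := by
      rw [← cond1.2, ← cond1'.2, hl1, hn]
    subst hl1
    subst hl2'
    subst hn
    subst hm
    subst hc
    rfl
  · -- surjectivity onto support of f
    rintro ⟨k, l, hl⟩ hq
    rw [Function.mem_support, hfdef] at hq
    simp only at hq
    have hend : pos s₀ l k = (x, j) := by
      by_contra hcon
      rw [if_neg hcon, zero_mul] at hq
      exact hq rfl
    have hwne : ewt A s₀ l ≠ 0 := by
      intro hcon
      rw [hcon, mul_zero] at hq
      exact hq rfl
    have hPk : (pos s₀ l k).1 = x := by rw [hend]
    have hex : ∃ t, (pos s₀ l t).1 = x := ⟨k, hPk⟩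
    set n := Nat.find hex with hndef
    have hn : (pos s₀ l n).1 = x := Nat.find_spec hex
    have hmin : ∀ t < n, ¬ (pos s₀ l t).1 = x := fun t ht => Nat.find_min hex ht
    have hnk : n ≤ k := Nat.find_min' hex hPk
    set c : Fin N := (pos s₀ l n).2 with hcdef
    have h₁ : (l.take n).length = n := by rw [List.length_take, hl]; omega
    have h₂ : ((l.drop n).map (shiftPt (-x))).length = k - n := by
      simp [List.length_drop, hl]
    have htake : ∀ t, t ≤ n → pos s₀ (l.take n) t = pos s₀ l t := fun t ht => pos_take ht
    have hxc : pos s₀ l n = (x, c) := Prod.ext hn rfl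
    have hendSt : endSt s₀ (l.take n) = (x, c) := by
      unfold endSt
      rw [h₁, htake n le_rfl, hxc]
    have hdk : pos (endSt s₀ (l.take n)) (l.drop n) (k - n) = (x, j) := by
      have h6 : k - n ≤ (l.drop n).length := by simp [hl]
      have h7 := pos_append_right (s := s₀) (l₁ := l.take n) (l₂ := l.drop n) h6
      rw [h₁, List.take_append_drop] at h7
      rw [← h7, show n + (k - n) = k by omega, hend]
    have h5 : ((0 : ℤ), c) = shiftPt (-x) ((x : ℤ), c) := by simp [shiftPt]
    have cond2 : pos ((0 : ℤ), c) ((l.drop n).map (shiftPt (-x))) (k - n) = ((0 : ℤ), j) := by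
      rw [h5, pos_map_shift (-x) ((x : ℤ), c) (l.drop n) (k - n), ← hendSt, hdk]
      unfold shiftPt
      simp
    have hsplit : ewt A s₀ (l.take n) * ewt A (endSt s₀ (l.take n)) (l.drop n) ≠ 0 := by
      rw [← ewt_append]
      rw [List.take_append_drop]
      exact hwne
    have hw1 : ewt A s₀ (l.take n) ≠ 0 := fun hcon => hsplit (by rw [hcon, zero_mul])
    have hw2 : ewt A ((0 : ℤ), c) ((l.drop n).map (shiftPt (-x))) ≠ 0 := by
      have h8 := ewt_shift (A := A) (-x) ((x : ℤ), c) (l.drop n)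
      rw [← h5] at h8
      rw [h8, hendSt] at *
      intro hcon
      rw [hendSt] at hsplit
      exact hsplit (by rw [hcon, mul_zero])
    have cond1 : hitsAt x n (pos s₀ (l.take n)) ∧ (pos s₀ (l.take n) n).2 = c := by
      refine ⟨⟨by rw [htake n le_rfl]; exact hn, fun t ht => by
        rw [htake t ht.le]; exact hmin t ht⟩, by rw [htake n le_rfl]⟩
    refine ⟨⟨⟨c, ⟨n, l.take n, h₁⟩, ⟨k - n, (l.drop n).map (shiftPt (-x)), h₂⟩⟩, ?_⟩, ?_⟩
    · rw [Function.mem_support, hgdef]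
      simp only
      rw [if_pos cond1, if_pos cond2, one_mul, one_mul]
      exact mul_ne_zero hw1 hw2
    · refine path_ext ?_
      show l.take n ++ ((l.drop n).map (shiftPt (-x))).map (shiftPt x) = l
      rw [shift_shift_cancel, List.take_append_drop]
  · -- value equality
    rintro ⟨⟨c, ⟨n, l₁, h₁⟩, ⟨m, l₂, h₂⟩⟩, hu⟩
    rw [Function.mem_support, hgdef] at hu
    simp only at hu
    have cond1 : hitsAt x n (pos s₀ l₁) ∧ (pos s₀ l₁ n).2 = c := by
      by_contra hcon
      rw [if_neg hcon, zero_mul, zero_mul] at hu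
      exact hu rfl
    have cond2 : pos ((0 : ℤ), c) l₂ m = ((0 : ℤ), j) := by
      by_contra hcon
      rw [if_neg hcon, zero_mul, mul_zero] at hu
      exact hu rfl
    have hend1 : pos s₀ l₁ n = (x, c) := Prod.ext cond1.1.1 cond1.2
    have hendSt : endSt s₀ l₁ = (x, c) := by
      unfold endSt
      rw [h₁]
      exact hend1
    have h5 : ((x : ℤ), c) = shiftPt x ((0 : ℤ), c) := by simp [shiftPt]
    have hconc : pos s₀ (l₁ ++ l₂.map (shiftPt x)) (n + m) = (x, j) := by
      have h3 : m ≤ (l₂.map (shiftPt x)).length := by simp [h₂]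
      have h4 := pos_append_right (s := s₀) (l₁ := l₁) (l₂ := l₂.map (shiftPt x)) h3
      rw [h₁] at h4
      rw [h4, hendSt, h5, pos_map_shift, cond2]
      unfold shiftPt
      simp
    have hwt : ewt A s₀ (l₁ ++ l₂.map (shiftPt x))
        = ewt A s₀ l₁ * ewt A ((0 : ℤ), c) l₂ := by
      rw [ewt_append, hendSt, h5, ewt_shift]
    simp only [hfdef, hgdef]
    rw [if_pos hconc, if_pos cond1, if_pos cond2, hwt, one_mul, one_mul, one_mul]

open Filter in
lemma geom_of_spec {N : ℕ} (hN : 0 < N) (M : Matrix (Fin N) (Fin N) ℂ)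
    (hspec : ∀ lam ∈ spectrum ℂ M, ‖lam‖ < 1) :
    ∃ r : ℝ, 0 ≤ r ∧ r < 1 ∧ ∃ n0 : ℕ, ∀ n ≥ n0, ∀ i j,
      ‖(M ^ n) i j‖ ≤ r ^ n := by
  haveI : NeZero N := ⟨hN.ne'⟩
  letI := Matrix.linftyOpNormedAddCommGroup (α := ℂ) (m := Fin N) (n := Fin N)
  letI := Matrix.linftyOpNormedRing (α := ℂ) (n := Fin N)
  letI := Matrix.linftyOpNormedAlgebra (R := ℂ) (α := ℂ) (n := Fin N)
  haveI : CompleteSpace (Matrix (Fin N) (Fin N) ℂ) := FiniteDimensional.complete ℂ _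
  obtain ⟨μ, hμmem, hμ⟩ := spectrum.exists_nnnorm_eq_spectralRadius (a := M)
  have hρ : spectralRadius ℂ M < 1 := by
    rw [← hμ]
    have := hspec μ hμmem
    exact_mod_cast ENNReal.coe_lt_one_iff.mpr (by exact_mod_cast this)
  obtain ⟨r, hr1, hr2⟩ := exists_between hρ
  have htd := spectrum.pow_nnnorm_pow_one_div_tendsto_nhds_spectralRadius M
  have hev : ∀ᶠ n : ℕ in atTop, (‖M ^ n‖₊ : ℝ≥0∞) ^ (1 / n : ℝ) < r :=
    htd.eventually_lt_const hr1
  have hr2' : r ≠ ⊤ := (hr2.trans_le le_top).ne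
  refine ⟨r.toReal, ENNReal.toReal_nonneg, ?_, ?_⟩
  · have := ENNReal.toReal_lt_toReal hr2' ENNReal.one_ne_top |>.mpr hr2
    simpa using this
  · obtain ⟨n0, hn0⟩ := eventually_atTop.mp (hev.and (eventually_ge_atTop 1))
    refine ⟨n0, fun n hn i j => ?_⟩
    obtain ⟨hlt, hn1⟩ := hn0 n hn
    have hnne : (n : ℝ) ≠ 0 := Nat.cast_ne_zero.mpr (by omega)
    have hle : (‖M ^ n‖₊ : ℝ≥0∞) ≤ r ^ n := by
      calc (‖M ^ n‖₊ : ℝ≥0∞) = ((‖M ^ n‖₊ : ℝ≥0∞) ^ (1 / n : ℝ)) ^ (n : ℝ) := by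
            rw [← ENNReal.rpow_mul, one_div, inv_mul_cancel₀ hnne, ENNReal.rpow_one]
        _ ≤ r ^ (n : ℝ) := ENNReal.rpow_le_rpow hlt.le (Nat.cast_nonneg n)
        _ = r ^ n := ENNReal.rpow_natCast r n
    have hnorm : ‖M ^ n‖ ≤ r.toReal ^ n := by
      have := ENNReal.toReal_le_toReal ENNReal.coe_ne_top (ENNReal.pow_ne_top hr2') |>.mpr hle
      simpa [ENNReal.toReal_pow] using this
    refine le_trans ?_ hnorm
    have h1 : ‖(M ^ n) i j‖₊ ≤ ‖M ^ n‖₊ := by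
      rw [Matrix.linfty_opNNNorm_def]
      exact le_trans (Finset.single_le_sum (f := fun j => ‖(M ^ n) i j‖₊)
        (fun _ _ => zero_le) (Finset.mem_univ j)) (Finset.le_sup (f := fun i => ∑ j : Fin N, ‖(M ^ n) i j‖₊) (Finset.mem_univ i))
    exact_mod_cast h1

open Filter in
lemma geom_series_real {N : ℕ} (hN : 0 < N) (Fr : Matrix (Fin N) (Fin N) ℝ)
    (hspec : ∀ lam ∈ spectrum ℂ (Fr.map Complex.ofReal), ‖lam‖ < 1) :
    IsUnit (1 - Fr) ∧ HasSum (fun k : ℕ => Fr ^ k) (1 - Fr)⁻¹ := by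
  obtain ⟨r, hr0, hr1, n0, hb⟩ := geom_of_spec hN _ hspec
  have hmap : ∀ k : ℕ, (Fr.map Complex.ofReal) ^ k = (Fr ^ k).map Complex.ofReal := by
    intro k
    have h0 : ∀ B : Matrix (Fin N) (Fin N) ℝ, B.map Complex.ofReal =
        (Complex.ofRealHom.mapMatrix : Matrix (Fin N) (Fin N) ℝ →+* _) B := fun _ => rfl
    rw [h0, h0, ← map_pow]
  have hsumentry : ∀ i j, Summable fun k => (Fr ^ k) i j := by
    intro i j
    refine (summable_nat_add_iff n0).mp (Summable.of_norm_bounded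
      (g := fun k => r ^ (k + n0)) ?_ ?_)
    · simpa [pow_add] using (summable_geometric_of_lt_one hr0 hr1).mul_right (r ^ n0)
    · intro k
      have hb' := hb (k + n0) (Nat.le_add_left _ _) i j
      rw [hmap] at hb'
      simpa [Matrix.map_apply] using hb'
  have hsum : Summable fun k : ℕ => Fr ^ k := by
    refine Pi.summable.mpr fun i => Pi.summable.mpr fun j => hsumentry i j
  have hH := hsum.hasSum
  set T := ∑' k : ℕ, Fr ^ k with hT
  have h1 : HasSum (fun k => Fr ^ (k + 1)) (T - 1) := by
    rw [hasSum_nat_add_iff]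
    simpa using hH
  have hmulL : HasSum (fun k => Fr ^ (k + 1)) (Fr * T) := by
    have := hH.map (AddMonoidHom.mulLeft Fr) (continuous_mul_left Fr)
    refine HasSum.congr_fun this fun k => ?_
    simp [Function.comp, pow_succ']
  have hmulR : HasSum (fun k => Fr ^ (k + 1)) (T * Fr) := by
    have := hH.map (AddMonoidHom.mulRight Fr) (continuous_mul_right Fr)
    refine HasSum.congr_fun this fun k => ?_
    simp [Function.comp, pow_succ]
  have hL : (1 - Fr) * T = 1 := by
    have h2 : Fr * T = T - 1 := hmulL.unique h1
    rw [sub_mul, one_mul, h2]; abel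
  have hR : T * (1 - Fr) = 1 := by
    have h2 : T * Fr = T - 1 := hmulR.unique h1
    rw [mul_sub, mul_one, h2]; abel
  have hunit : IsUnit (1 - Fr) := by
    refine (Matrix.isUnit_iff_isUnit_det _).mpr (IsUnit.of_mul_eq_one T.det ?_)
    rw [← Matrix.det_mul, hL, Matrix.det_one]
  refine ⟨hunit, ?_⟩
  rw [Matrix.inv_eq_right_inv hL]
  exact hH

/-! ### relating `eFm` to `Fmat` -/

lemma summable_wA (hA : ∀ m i j, 0 ≤ A m i j) (hskip : ∀ m : ℤ, 2 ≤ m → A m = 0)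
    (hsum : ∀ i, Summable fun q : ℤ × Fin N => A q.1 i q.2)
    {z : ℝ} (hz0 : 0 < z) (hz1 : z ≤ 1) (i j : Fin N) :
    Summable fun m : ℤ => z ^ (-m) * A m i j := by
  have hbase : Summable fun m : ℤ => A m i j := by
    have hinj : Function.Injective (fun m : ℤ => (m, j)) := fun a b h => by
      simpa using congrArg Prod.fst h
    exact (hsum i).comp_injective hinj
  refine Summable.of_nonneg_of_le
    (fun m => mul_nonneg (zpow_pos hz0 _).le (hA _ _ _))
    (fun m => ?_) (hbase.mul_left (max 1 z⁻¹))
  rcases le_or_gt m 0 with hm | hm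
  · have h1 : z ^ (-m) ≤ 1 := by
      rw [show -m = ((-m).toNat : ℤ) by omega, zpow_natCast]
      exact pow_le_one₀ hz0.le hz1
    calc z ^ (-m) * A m i j ≤ 1 * A m i j :=
          mul_le_mul_of_nonneg_right h1 (hA _ _ _)
      _ ≤ max 1 z⁻¹ * A m i j :=
          mul_le_mul_of_nonneg_right (le_max_left _ _) (hA _ _ _)
  · rcases eq_or_lt_of_le (show (1:ℤ) ≤ m by omega) with hm1 | hm2
    · have : m = 1 := by omega
      subst this
      have h1 : z ^ (-(1:ℤ)) = z⁻¹ := by simp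
      rw [h1]
      exact mul_le_mul_of_nonneg_right (le_max_right _ _) (hA _ _ _)
    · have hm2' : (2:ℤ) ≤ m := by omega
      rw [hskip m hm2']
      simp only [Matrix.zero_apply, mul_zero]
      positivity

lemma Fmat_entry (i j : Fin N) {z : ℝ} :
    Fmat A z i j = ∑' m : ℤ, z ^ (-m) * A m i j := by
  unfold Fmat
  rw [Matrix.of_apply]
  rw [← (Equiv.neg ℤ).tsum_eq (fun m : ℤ => z ^ m * A (-m) i j)]
  refine tsum_congr fun m => ?_
  simp

lemma Fmat_nonneg (hA : ∀ m i j, 0 ≤ A m i j) {z : ℝ} (hz0 : 0 < z) (i j : Fin N) :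
    0 ≤ Fmat A z i j := by
  rw [Fmat_entry]
  exact tsum_nonneg fun m => mul_nonneg (zpow_pos hz0 _).le (hA _ _ _)

lemma eFm_entry (hA : ∀ m i j, 0 ≤ A m i j) (hskip : ∀ m : ℤ, 2 ≤ m → A m = 0)
    (hsum : ∀ i, Summable fun q : ℤ × Fin N => A q.1 i q.2)
    {z : ℝ} (hz0 : 0 < z) (hz1 : z ≤ 1) (i j : Fin N) :
    eFm A z i j = ENNReal.ofReal (Fmat A z i j) := by
  unfold eFm
  rw [Matrix.of_apply, Fmat_entry,
    ENNReal.ofReal_tsum_of_nonneg (fun m => mul_nonneg (zpow_pos hz0 _).le (hA _ _ _))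
      (summable_wA hA hskip hsum hz0 hz1 i j)]
  refine tsum_congr fun m => ?_
  rw [ENNReal.ofReal_mul (zpow_pos hz0 _).le]
  rfl

lemma pow_entry_nonneg {M : Matrix (Fin N) (Fin N) ℝ} (hM : ∀ i j, 0 ≤ M i j) (k : ℕ) :
    ∀ i j, 0 ≤ (M ^ k) i j := by
  induction k with
  | zero =>
      intro i j
      rw [pow_zero]
      rw [Matrix.one_apply]
      split_ifs <;> norm_num
  | succ k ih =>
      intro i j
      rw [pow_succ, Matrix.mul_apply]
      exact Finset.sum_nonneg fun c _ => mul_nonneg (ih i c) (hM c j)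

lemma eFm_pow (hA : ∀ m i j, 0 ≤ A m i j) (hskip : ∀ m : ℤ, 2 ≤ m → A m = 0)
    (hsum : ∀ i, Summable fun q : ℤ × Fin N => A q.1 i q.2)
    {z : ℝ} (hz0 : 0 < z) (hz1 : z ≤ 1) (k : ℕ) (i j : Fin N) :
    (eFm A z ^ k) i j = ENNReal.ofReal ((Fmat A z ^ k) i j) := by
  induction k generalizing i j with
  | zero =>
      rw [pow_zero, pow_zero, Matrix.one_apply, Matrix.one_apply]
      split_ifs <;> simp
  | succ k ih =>
      rw [pow_succ, pow_succ, Matrix.mul_apply, Matrix.mul_apply,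
        ENNReal.ofReal_sum_of_nonneg (fun c _ =>
          mul_nonneg (pow_entry_nonneg (Fmat_nonneg hA hz0) k i c) (Fmat_nonneg hA hz0 c j))]
      refine Finset.sum_congr rfl fun c _ => ?_
      rw [ih i c, eFm_entry hA hskip hsum hz0 hz1,
        ENNReal.ofReal_mul (pow_entry_nonneg (Fmat_nonneg hA hz0) k i c)]


end AuxProof

/-- If the spectral radius of F(z) is < 1 then L̃ is finite,
Σ_{x∈ℤ} z^{-x} ℙ(J_{τ^{x}}) L̃ converges entrywise, I - F(z) is invertible with
(I-F(z))⁻¹ = Σ_k F(z)^k, and Σ_{x∈ℤ} z^{-x} ℙ(J_{τ^{x}}) L̃ = (I - F(z))⁻¹. -/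
theorem statement5 {N : ℕ} (hN : 0 < N) (A : ℤ → Matrix (Fin N) (Fin N) ℝ)
    (hA : ∀ m i j, 0 ≤ A m i j)
    (hskip : ∀ m : ℤ, 2 ≤ m → A m = 0)
    (hsum : ∀ i, Summable fun q : ℤ × Fin N => A q.1 i q.2)
    (hsub : ∀ i, ∑' q : ℤ × Fin N, A q.1 i q.2 ≤ 1)
    (z : ℝ) (hz0 : 0 < z) (hz1 : z ≤ 1)
    (hspec : ∀ lam ∈ spectrum ℂ ((Fmat A z).map Complex.ofReal), ‖lam‖ < 1) :
    (∀ i j : Fin N,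
      Summable fun k : ℕ => prob A ((0 : ℤ), i) k fun p => p k = ((0 : ℤ), j)) ∧
    IsUnit (1 - Fmat A z) ∧
    HasSum (fun k : ℕ => Fmat A z ^ k) (1 - Fmat A z)⁻¹ ∧
    (∀ i j : Fin N, Summable fun x : ℤ => z ^ (-x) * (hitMat A 1 x * Ltilde A) i j) ∧
    (Matrix.of (fun i j => ∑' x : ℤ, z ^ (-x) * (hitMat A 1 x * Ltilde A) i j) :
        Matrix (Fin N) (Fin N) ℝ) = (1 - Fmat A z)⁻¹ := by
  classical
  obtain ⟨hunit, hHasSum⟩ := geom_series_real hN (Fmat A z) hspec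
  have hentry : ∀ i j : Fin N, HasSum (fun k : ℕ => (Fmat A z ^ k) i j)
      ((1 - Fmat A z)⁻¹ i j) := by
    intro i j
    exact Pi.hasSum.mp (Pi.hasSum.mp hHasSum i) j
  have hFsumm : ∀ i j : Fin N, Summable fun k : ℕ => (Fmat A z ^ k) i j :=
    fun i j => (hentry i j).summable
  have hSm_nonneg : ∀ i j : Fin N, 0 ≤ (1 - Fmat A z)⁻¹ i j := by
    intro i j
    rw [← (hentry i j).tsum_eq]
    exact tsum_nonneg fun k => pow_entry_nonneg (Fmat_nonneg hA hz0) k i j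
  have hofS : ∀ i j : Fin N, (∑' k : ℕ, (eFm A z ^ k) i j)
      = ENNReal.ofReal ((1 - Fmat A z)⁻¹ i j) := by
    intro i j
    rw [tsum_congr (fun k => eFm_pow hA hskip hsum hz0 hz1 k i j),
      ← ENNReal.ofReal_tsum_of_nonneg
        (fun k => pow_entry_nonneg (Fmat_nonneg hA hz0) k i j) (hFsumm i j),
      (hentry i j).tsum_eq]
  have hqk_le : ∀ (i j : Fin N) (k : ℕ), eqk A k 0 i j ≤ (eFm A z ^ k) i j := by
    intro i j k
    rw [← EI hz0 k i j]
    have h0 := ENNReal.le_tsum (f := fun x : ℤ => w z x * eqk A k x i j) 0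
    simpa [hw_zero] using h0
  have hsum_eqk_fin : ∀ i j : Fin N, (∑' k : ℕ, eqk A k 0 i j) ≠ ⊤ := by
    intro i j
    refine ne_top_of_le_ne_top ?_ (ENNReal.tsum_le_tsum (fun k => hqk_le i j k))
    rw [hofS i j]
    exact ENNReal.ofReal_ne_top
  have hLfin : ∀ c jj : Fin N, eL A c jj ≠ ⊤ := fun c jj => hsum_eqk_fin c jj
  -- part 1
  have part1 : ∀ i j : Fin N,
      Summable fun k : ℕ => prob A ((0 : ℤ), i) k fun p => p k = ((0 : ℤ), j) := by
    intro i j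
    have heq : (fun k : ℕ => prob A ((0 : ℤ), i) k fun p => p k = ((0 : ℤ), j))
        = fun k : ℕ => (eqk A k 0 i j).toReal := by
      funext k
      exact prob_eq_toReal hA _ _ _
    rw [heq]
    exact ENNReal.summable_toReal (hsum_eqk_fin i j)
  -- bridges for hitMat and Ltilde
  have hhit : ∀ (x : ℤ) (i c : Fin N), hitMat A 1 x i c = (ehit A x i c).toReal := by
    intro x i c
    show (∑' n : ℕ, (1:ℝ) ^ n * prob A ((0 : ℤ), i) n fun p => hitsAt x n p ∧ (p n).2 = c) = _
    rw [ehit, ENNReal.tsum_toReal_eq (fun n => eprob_ne_top hA hsum hsub _ _ _)]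
    refine tsum_congr fun n => ?_
    rw [one_pow, one_mul, prob_eq_toReal hA]
  have hLt : ∀ c j : Fin N, Ltilde A c j = (eL A c j).toReal := by
    intro c j
    show (∑' k : ℕ, (1:ℝ) ^ k * prob A ((0 : ℤ), c) k fun p => p k = ((0:ℤ), j)) = _
    rw [eL, ENNReal.tsum_toReal_eq (fun k => (by exact eprob_ne_top hA hsum hsub _ _ _ : eqk A k 0 c j ≠ ⊤))]
    refine tsum_congr fun k => ?_
    rw [one_pow, one_mul, prob_eq_toReal hA]
    rfl
  -- main ENNReal chain
  have hQtot : ∀ i j : Fin N,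
      (∑' x : ℤ, w z x * ∑ c : Fin N, ehit A x i c * eL A c j)
        = ENNReal.ofReal ((1 - Fmat A z)⁻¹ i j) := by
    intro i j
    have h1 : ∀ x : ℤ, (∑ c : Fin N, ehit A x i c * eL A c j) = eocc A x i j :=
      fun x => (EII x i j).symm
    calc (∑' x : ℤ, w z x * ∑ c : Fin N, ehit A x i c * eL A c j)
        = ∑' x : ℤ, w z x * eocc A x i j := by
          exact tsum_congr fun x => by rw [h1 x]
      _ = ∑' (x : ℤ) (k : ℕ), w z x * eqk A k x i j := by
          refine tsum_congr fun x => ?_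
          rw [eocc, ENNReal.tsum_mul_left]
      _ = ∑' (k : ℕ) (x : ℤ), w z x * eqk A k x i j := ENNReal.tsum_comm
      _ = ∑' k : ℕ, (eFm A z ^ k) i j := tsum_congr fun k => EI hz0 k i j
      _ = ENNReal.ofReal ((1 - Fmat A z)⁻¹ i j) := hofS i j
  have hwx_ne : ∀ x : ℤ, w z x ≠ 0 := fun x =>
    (ENNReal.ofReal_pos.mpr (zpow_pos hz0 _)).ne'
  have hQfin : ∀ (i j : Fin N) (x : ℤ),
      (∑ c : Fin N, ehit A x i c * eL A c j) ≠ ⊤ := by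
    intro i j x
    intro hcon
    have h1 : w z x * ∑ c : Fin N, ehit A x i c * eL A c j
        ≤ ENNReal.ofReal ((1 - Fmat A z)⁻¹ i j) := by
      rw [← hQtot i j]
      exact ENNReal.le_tsum x
    rw [hcon, ENNReal.mul_top (hwx_ne x)] at h1
    exact ENNReal.ofReal_ne_top (top_le_iff.mp h1)
  have hterm_fin : ∀ (i j : Fin N) (x : ℤ) (c : Fin N),
      ehit A x i c * eL A c j ≠ ⊤ := by
    intro i j x c
    refine ne_top_of_le_ne_top (hQfin i j x) ?_
    exact Finset.single_le_sum (f := fun c => ehit A x i c * eL A c j)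
      (fun _ _ => zero_le) (Finset.mem_univ c)
  have hentryreal : ∀ (x : ℤ) (i j : Fin N), (hitMat A 1 x * Ltilde A) i j
      = (∑ c : Fin N, ehit A x i c * eL A c j).toReal := by
    intro x i j
    rw [Matrix.mul_apply, ENNReal.toReal_sum (fun c _ => hterm_fin i j x c)]
    refine Finset.sum_congr rfl fun c _ => ?_
    rw [hhit x i c, hLt c j, ← ENNReal.toReal_mul]
  have hxterm : ∀ (i j : Fin N) (x : ℤ), z ^ (-x) * (hitMat A 1 x * Ltilde A) i j
      = (w z x * ∑ c : Fin N, ehit A x i c * eL A c j).toReal := by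
    intro i j x
    rw [hentryreal x i j, ENNReal.toReal_mul]
    congr 1
    rw [w, ENNReal.toReal_ofReal (zpow_pos hz0 _).le]
  refine ⟨part1, hunit, hHasSum, ?_, ?_⟩
  · intro i j
    have heq2 : (fun x : ℤ => z ^ (-x) * (hitMat A 1 x * Ltilde A) i j)
        = fun x : ℤ => (w z x * ∑ c : Fin N, ehit A x i c * eL A c j).toReal := by
      funext x
      exact hxterm i j x
    rw [heq2]
    refine ENNReal.summable_toReal ?_
    rw [hQtot i j]
    exact ENNReal.ofReal_ne_top
  · ext i j
    rw [Matrix.of_apply]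
    calc (∑' x : ℤ, z ^ (-x) * (hitMat A 1 x * Ltilde A) i j)
        = ∑' x : ℤ, (w z x * ∑ c : Fin N, ehit A x i c * eL A c j).toReal :=
          tsum_congr fun x => hxterm i j x
      _ = (∑' x : ℤ, w z x * ∑ c : Fin N, ehit A x i c * eL A c j).toReal :=
          (ENNReal.tsum_toReal_eq (fun x =>
            ENNReal.mul_ne_top ENNReal.ofReal_ne_top (hQfin i j x))).symm
      _ = (ENNReal.ofReal ((1 - Fmat A z)⁻¹ i j)).toReal := by rw [hQtot i j]
      _ = (1 - Fmat A z)⁻¹ i j := ENNReal.toReal_ofReal (hSm_nonneg i j)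



end MACPaper

end
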